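/- Let φ(θ¹,θ²) = log Γ((θ¹−θ²)/2) + log Γ((θ¹+θ²)/2) − log Γ(θ¹) + (log 2)(θ¹−1) on the open domain D = {(θ¹,θ²) : θ¹+θ² > 0, θ¹−θ² > 0}, let G(θ) be the Hessian matrix of φ (the Fisher information matrix of the beta-logistic family), and assume det G(θ) ≠ 0 on D. Then for every real α, the function ω^{(α)}(θ) = (det G(θ))^{(1−α)/2} is an α-parallel prior: for i = 1, 2 and all θ ∈ D, ∂_i ω^{(α)}(θ) = ((1−α)/2) · ( Σ_{j,k=1}^{2} ∂_i∂_j∂_k φ(θ) · (G(θ)^{−1})_{jk} ) · ω^{(α)}(θ). -/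

import Mathlib

/-- Partial derivative of a two-variable function in the first variable. -/
noncomputable def D1 (f : ℝ → ℝ → ℝ) : ℝ → ℝ → ℝ := fun s t => deriv (fun u => f u t) s

/-- Partial derivative of a two-variable function in the second variable. -/
noncomputable def D2 (f : ℝ → ℝ → ℝ) : ℝ → ℝ → ℝ := fun s t => deriv (fun v => f s v) t

/-- The `i`-th partial derivative operator, `i : Fin 2`. -/
noncomputable def Pd (i : Fin 2) (f : ℝ → ℝ → ℝ) : ℝ → ℝ → ℝ :=
  if i = 0 then D1 f else D2 f

/-- The potential function of the beta-logistic exponential family: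
`φ(θ¹,θ²) = log Γ((θ¹−θ²)/2) + log Γ((θ¹+θ²)/2) − log Γ(θ¹) + (log 2)(θ¹−1)`. -/
noncomputable def potential (θ1 θ2 : ℝ) : ℝ :=
  Real.log (Real.Gamma ((θ1 - θ2) / 2)) + Real.log (Real.Gamma ((θ1 + θ2) / 2)) -
    Real.log (Real.Gamma θ1) + Real.log 2 * (θ1 - 1)

/-- The Fisher information matrix of the beta-logistic family: the Hessian of the
potential function in the natural coordinates. -/
noncomputable def fisherG (θ1 θ2 : ℝ) : Matrix (Fin 2) (Fin 2) ℝ :=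
  Matrix.of fun i j => Pd i (Pd j potential) θ1 θ2

namespace BLPrior

noncomputable def e : Fin 2 → ℝ × ℝ := ![(1, 0), (0, 1)]

noncomputable def pdv (i : Fin 2) (F : ℝ × ℝ → ℝ) : ℝ × ℝ → ℝ :=
  fun p => fderiv ℝ F p (e i)

def U : Set (ℝ × ℝ) := {p | 0 < p.1 + p.2 ∧ 0 < p.1 - p.2}

lemma isOpen_U : IsOpen U :=
  (isOpen_lt continuous_const (continuous_fst.add continuous_snd)).inter
    (isOpen_lt continuous_const (continuous_fst.sub continuous_snd))

lemma pdv_contDiffAt {n : WithTop ℕ∞} {F : ℝ × ℝ → ℝ} {x : ℝ × ℝ}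
    (hF : ContDiffAt ℝ (n + 1) F x) (i : Fin 2) : ContDiffAt ℝ n (pdv i F) x :=
  (hF.fderiv_right le_rfl).clm_apply contDiffAt_const

lemma contDiffAt_Gamma {n : WithTop ℕ∞} {x : ℝ} (hx : 0 < x) :
    ContDiffAt ℝ n Real.Gamma x := by
  have hana : AnalyticAt ℂ Complex.Gamma (x : ℂ) := by
    rw [Complex.analyticAt_iff_eventually_differentiableAt]
    have hopen : IsOpen {z : ℂ | 0 < z.re} := isOpen_lt continuous_const Complex.continuous_re
    have hx' : (x : ℂ) ∈ {z : ℂ | 0 < z.re} := by simpa using hx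
    filter_upwards [hopen.mem_nhds hx'] with z hz
    refine Complex.differentiableAt_Gamma z fun m => ?_
    intro h
    rw [h] at hz
    simp only [Set.mem_setOf_eq, Complex.neg_re, Complex.natCast_re] at hz
    have : (0:ℝ) ≤ m := Nat.cast_nonneg m
    linarith
  have h2 : ContDiffAt ℂ n Complex.Gamma (x : ℂ) := hana.contDiffAt
  have h1 : ContDiffAt ℝ n (fun y : ℝ => (Complex.Gamma (y : ℂ)).re) x :=
    Complex.reCLM.contDiff.contDiffAt.comp _
      ((h2.restrict_scalars ℝ).comp x Complex.ofRealCLM.contDiff.contDiffAt)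
  refine h1.congr_of_eventuallyEq ?_
  filter_upwards with y
  rw [Complex.Gamma_ofReal, Complex.ofReal_re]

lemma pd_bridge {f : ℝ → ℝ → ℝ} {F : ℝ × ℝ → ℝ} {s t : ℝ}
    (hst : (s, t) ∈ U) (heq : ∀ q ∈ U, f q.1 q.2 = F q)
    (hF : DifferentiableAt ℝ F (s, t)) (i : Fin 2) :
    Pd i f s t = pdv i F (s, t) := by
  have hmem : U ∈ nhds ((s, t) : ℝ × ℝ) := isOpen_U.mem_nhds hst
  fin_cases i
  · have hL : HasDerivAt (fun u : ℝ => ((u, t) : ℝ × ℝ)) ((1 : ℝ), (0 : ℝ)) s :=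
      (hasDerivAt_id s).prodMk (hasDerivAt_const s t)
    have hC : HasDerivAt (fun u => F (u, t)) (fderiv ℝ F (s, t) (1, 0)) s :=
      hF.hasFDerivAt.comp_hasDerivAt s hL
    have hev : (fun u => f u t) =ᶠ[nhds s] fun u => F (u, t) := by
      have hcont : Continuous fun u : ℝ => ((u, t) : ℝ × ℝ) :=
        continuous_id.prodMk continuous_const
      filter_upwards [hcont.continuousAt.preimage_mem_nhds hmem] with u hu
      exact heq (u, t) hu
    show D1 f s t = _
    unfold D1
    rw [hev.deriv_eq, hC.deriv]
    simp [pdv, e]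
  · have hL : HasDerivAt (fun v : ℝ => ((s, v) : ℝ × ℝ)) ((0 : ℝ), (1 : ℝ)) t :=
      (hasDerivAt_const t s).prodMk (hasDerivAt_id t)
    have hC : HasDerivAt (fun v => F (s, v)) (fderiv ℝ F (s, t) (0, 1)) t :=
      hF.hasFDerivAt.comp_hasDerivAt t hL
    have hev : (fun v => f s v) =ᶠ[nhds t] fun v => F (s, v) := by
      have hcont : Continuous fun v : ℝ => ((s, v) : ℝ × ℝ) :=
        continuous_const.prodMk continuous_id
      filter_upwards [hcont.continuousAt.preimage_mem_nhds hmem] with v hv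
      exact heq (s, v) hv
    show D2 f s t = _
    unfold D2
    rw [hev.deriv_eq, hC.deriv]
    simp [pdv, e]

lemma pdv_comm {F : ℝ × ℝ → ℝ} {x : ℝ × ℝ} (hF : ContDiffAt ℝ 2 F x) (i j : Fin 2) :
    pdv i (pdv j F) x = pdv j (pdv i F) x := by
  have hd : DifferentiableAt ℝ (fderiv ℝ F) x :=
    (hF.fderiv_right (by norm_num : (1:WithTop ℕ∞) + 1 ≤ 2)).differentiableAt one_ne_zero
  have key : ∀ v w : Fin 2, pdv v (pdv w F) x = fderiv ℝ (fderiv ℝ F) x (e v) (e w) := by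
    intro v w
    have hc : HasFDerivAt (fun p => (fderiv ℝ F p) (e w))
        ((ContinuousLinearMap.apply ℝ ℝ (e w)).comp (fderiv ℝ (fderiv ℝ F) x)) x :=
      (ContinuousLinearMap.apply ℝ ℝ (e w)).hasFDerivAt.comp x hd.hasFDerivAt
    show fderiv ℝ (fun p => (fderiv ℝ F p) (e w)) x (e v) = _
    rw [hc.fderiv]
    rfl
  rw [key i j, key j i, hF.isSymmSndFDerivAt (by simp) (e i) (e j)]

noncomputable def Phi : ℝ × ℝ → ℝ := fun p => potential p.1 p.2

lemma contDiffAt_Phi {n : WithTop ℕ∞} {p : ℝ × ℝ} (hp : p ∈ U) :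
    ContDiffAt ℝ n Phi p := by
  obtain ⟨h1, h2⟩ := hp
  have hG : ∀ {x : ℝ}, 0 < x →
      ContDiffAt ℝ n (fun y => Real.log (Real.Gamma y)) x := fun hx =>
    (contDiffAt_Gamma hx).log (Real.Gamma_pos_of_pos hx).ne'
  have c1 : ContDiffAt ℝ n (fun q : ℝ × ℝ => (q.1 - q.2) / 2) p :=
    ((contDiff_fst.sub contDiff_snd).div_const 2).contDiffAt
  have c2 : ContDiffAt ℝ n (fun q : ℝ × ℝ => (q.1 + q.2) / 2) p :=
    ((contDiff_fst.add contDiff_snd).div_const 2).contDiffAt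
  have hx1 : (0:ℝ) < (p.1 - p.2) / 2 := by linarith
  have hx2 : (0:ℝ) < (p.1 + p.2) / 2 := by linarith
  have hx3 : (0:ℝ) < p.1 := by linarith
  have t1 : ContDiffAt ℝ n (fun q : ℝ × ℝ => Real.log (Real.Gamma ((q.1 - q.2) / 2))) p :=
    by have := (hG hx1).comp p c1; exact this
  have t2 : ContDiffAt ℝ n (fun q : ℝ × ℝ => Real.log (Real.Gamma ((q.1 + q.2) / 2))) p :=
    by have := (hG hx2).comp p c2; exact this
  have t3 : ContDiffAt ℝ n (fun q : ℝ × ℝ => Real.log (Real.Gamma q.1)) p :=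
    (hG hx3).comp p contDiff_fst.contDiffAt
  have t4 : ContDiffAt ℝ n (fun q : ℝ × ℝ => Real.log 2 * (q.1 - 1)) p :=
    contDiffAt_const.mul (contDiff_fst.contDiffAt.sub contDiffAt_const)
  exact ((t1.add t2).sub t3).add t4


end BLPrior

set_option maxHeartbeats 1000000

open BLPrior

/-- The beta-logistic family admits an α-parallel prior for every real `α`: assuming
`det G ≠ 0` on the domain `θ¹ ± θ² > 0`, the function `ω^{(α)} = (det G)^{(1−α)/2}`
satisfies `∂ᵢ ω^{(α)} = ((1−α)/2) (Σ_{j,k} ∂ᵢ∂ⱼ∂ₖφ · (G⁻¹)_{jk}) ω^{(α)}` there. -/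
theorem alpha_parallel_prior (α : ℝ)
    (hdet : ∀ θ1 θ2 : ℝ, 0 < θ1 + θ2 → 0 < θ1 - θ2 → (fisherG θ1 θ2).det ≠ 0) :
    ∀ θ1 θ2 : ℝ, 0 < θ1 + θ2 → 0 < θ1 - θ2 → ∀ i : Fin 2,
      Pd i (fun s t => (fisherG s t).det ^ ((1 - α) / 2)) θ1 θ2 =
        ((1 - α) / 2) *
          (∑ j : Fin 2, ∑ k : Fin 2,
            Pd i (Pd j (Pd k potential)) θ1 θ2 * (fisherG θ1 θ2)⁻¹ j k) *
          (fisherG θ1 θ2).det ^ ((1 - α) / 2) := by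
  intro θ1 θ2 h1 h2 i
  have hp : ((θ1, θ2) : ℝ × ℝ) ∈ U := ⟨h1, h2⟩
  set c0 : ℝ := (1 - α) / 2 with hc0
  -- bridges between curried partial derivatives and directional fderivs
  have hb1 : ∀ k : Fin 2, ∀ q ∈ U, Pd k potential q.1 q.2 = pdv k Phi q := fun k q hq =>
    pd_bridge hq (fun r _ => rfl) ((contDiffAt_Phi (n := 1) hq).differentiableAt one_ne_zero) k
  have hdiff2 : ∀ (k : Fin 2), ∀ q ∈ U, DifferentiableAt ℝ (pdv k Phi) q := fun k q hq =>
    (pdv_contDiffAt (n := 1) (contDiffAt_Phi hq) k).differentiableAt one_ne_zero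
  have hb2 : ∀ j k : Fin 2, ∀ q ∈ U,
      Pd j (Pd k potential) q.1 q.2 = pdv j (pdv k Phi) q :=
    fun j k q hq => pd_bridge hq (hb1 k) (hdiff2 k q hq) j
  have hdiff3 : ∀ (j k : Fin 2), ∀ q ∈ U,
      DifferentiableAt ℝ (pdv j (pdv k Phi)) q := fun j k q hq =>
    ((pdv_contDiffAt (n := 1) (pdv_contDiffAt (n := 1 + 1) (contDiffAt_Phi hq) k) j)).differentiableAt one_ne_zero
  have hb3 : ∀ j k : Fin 2, Pd i (Pd j (Pd k potential)) θ1 θ2 =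
      pdv i (pdv j (pdv k Phi)) (θ1, θ2) :=
    fun j k => pd_bridge hp (hb2 j k) (hdiff3 j k _ hp) i
  have hGent : ∀ q ∈ U, ∀ j k : Fin 2,
      fisherG q.1 q.2 j k = pdv j (pdv k Phi) q := by
    intro q hq j k
    show Pd j (Pd k potential) q.1 q.2 = _
    exact hb2 j k q hq
  -- the determinant as a smooth function on U
  set A : ℝ × ℝ → ℝ := pdv 0 (pdv 0 Phi) with hAdef
  set B : ℝ × ℝ → ℝ := pdv 0 (pdv 1 Phi) with hBdef
  set C : ℝ × ℝ → ℝ := pdv 1 (pdv 0 Phi) with hCdef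
  set Dd : ℝ × ℝ → ℝ := pdv 1 (pdv 1 Phi) with hDdef
  have hdetU : ∀ q ∈ U, (fisherG q.1 q.2).det = A q * Dd q - B q * C q := by
    intro q hq
    rw [Matrix.det_fin_two, hGent q hq 0 0, hGent q hq 0 1, hGent q hq 1 0, hGent q hq 1 1]
  obtain ⟨Fd, hFdef⟩ : ∃ F : ℝ × ℝ → ℝ, F = fun q => A q * Dd q - B q * C q := ⟨_, rfl⟩
  have hFval : ∀ q, Fd q = A q * Dd q - B q * C q := fun q => by rw [hFdef]
  have hdd : (fisherG θ1 θ2).det = Fd (θ1, θ2) := by rw [hFval]; exact hdetU (θ1, θ2) hp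
  have hne : Fd (θ1, θ2) ≠ 0 := by rw [← hdd]; exact hdet θ1 θ2 h1 h2
  -- derivative of the determinant
  have hA' : HasFDerivAt A (fderiv ℝ A (θ1, θ2)) (θ1, θ2) := (hdiff3 0 0 _ hp).hasFDerivAt
  have hB' : HasFDerivAt B (fderiv ℝ B (θ1, θ2)) (θ1, θ2) := (hdiff3 0 1 _ hp).hasFDerivAt
  have hC' : HasFDerivAt C (fderiv ℝ C (θ1, θ2)) (θ1, θ2) := (hdiff3 1 0 _ hp).hasFDerivAt
  have hD' : HasFDerivAt Dd (fderiv ℝ Dd (θ1, θ2)) (θ1, θ2) := (hdiff3 1 1 _ hp).hasFDerivAt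
  have hFd' : HasFDerivAt Fd
      ((A (θ1, θ2) • fderiv ℝ Dd (θ1, θ2) + Dd (θ1, θ2) • fderiv ℝ A (θ1, θ2)) -
        (B (θ1, θ2) • fderiv ℝ C (θ1, θ2) + C (θ1, θ2) • fderiv ℝ B (θ1, θ2))) (θ1, θ2) :=
    hFdef ▸ ((hA'.mul hD').sub (hB'.mul hC'))
  have hrpow : HasFDerivAt (fun q => Fd q ^ c0)
      ((c0 * Fd (θ1, θ2) ^ (c0 - 1)) •
        ((A (θ1, θ2) • fderiv ℝ Dd (θ1, θ2) + Dd (θ1, θ2) • fderiv ℝ A (θ1, θ2)) -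
          (B (θ1, θ2) • fderiv ℝ C (θ1, θ2) + C (θ1, θ2) • fderiv ℝ B (θ1, θ2)))) (θ1, θ2) :=
    hFd'.rpow_const (Or.inl hne)
  -- left-hand side
  have hL : Pd i (fun s t => (fisherG s t).det ^ c0) θ1 θ2 =
      pdv i (fun q => Fd q ^ c0) (θ1, θ2) :=
    pd_bridge hp (fun q hq => by rw [hdetU q hq, hFval]) hrpow.differentiableAt i
  rw [hL]
  have hLval : pdv i (fun q => Fd q ^ c0) (θ1, θ2) =
      c0 * Fd (θ1, θ2) ^ (c0 - 1) *
        (A (θ1, θ2) * (fderiv ℝ Dd (θ1, θ2) (e i)) + Dd (θ1, θ2) * (fderiv ℝ A (θ1, θ2) (e i)) -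
          (B (θ1, θ2) * (fderiv ℝ C (θ1, θ2) (e i)) + C (θ1, θ2) * (fderiv ℝ B (θ1, θ2) (e i)))) := by
    show fderiv ℝ (fun q => Fd q ^ c0) (θ1, θ2) (e i) = _
    rw [hrpow.fderiv]
    simp only [ContinuousLinearMap.coe_smul', Pi.smul_apply, ContinuousLinearMap.coe_sub',
      Pi.sub_apply, ContinuousLinearMap.add_apply, ContinuousLinearMap.coe_smul,
      ContinuousLinearMap.smul_apply, smul_eq_mul]
    try ring
  rw [hLval]
  -- right-hand side : expand the sum and inverse entries
  simp only [Fin.sum_univ_two]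
  rw [hb3 0 0, hb3 0 1, hb3 1 0, hb3 1 1]
  have hinv : ∀ j k : Fin 2, (fisherG θ1 θ2)⁻¹ j k =
      ((fisherG θ1 θ2).det)⁻¹ * (fisherG θ1 θ2).adjugate j k := by
    intro j k
    rw [Matrix.inv_def, Matrix.smul_apply, Ring.inverse_eq_inv', smul_eq_mul]
  have hadj := Matrix.adjugate_fin_two (fisherG θ1 θ2)
  have h00 : (fisherG θ1 θ2)⁻¹ 0 0 = (Fd (θ1, θ2))⁻¹ * Dd (θ1, θ2) := by
    rw [hinv, hadj, hdd]
    congr 1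
    simpa using hGent _ hp 1 1
  have h01 : (fisherG θ1 θ2)⁻¹ 0 1 = (Fd (θ1, θ2))⁻¹ * (-(B (θ1, θ2))) := by
    rw [hinv, hadj, hdd]
    congr 1
    simpa using congrArg Neg.neg (hGent _ hp 0 1)
  have h10 : (fisherG θ1 θ2)⁻¹ 1 0 = (Fd (θ1, θ2))⁻¹ * (-(C (θ1, θ2))) := by
    rw [hinv, hadj, hdd]
    congr 1
    simpa using congrArg Neg.neg (hGent _ hp 1 0)
  have h11 : (fisherG θ1 θ2)⁻¹ 1 1 = (Fd (θ1, θ2))⁻¹ * A (θ1, θ2) := by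
    rw [hinv, hadj, hdd]
    congr 1
    simpa using hGent _ hp 0 0
  rw [h00, h01, h10, h11, hdd]
  -- identify third derivatives with directional derivatives of the entry functions
  have e00 : pdv i (pdv 0 (pdv 0 Phi)) (θ1, θ2) = fderiv ℝ A (θ1, θ2) (e i) := rfl
  have e01 : pdv i (pdv 0 (pdv 1 Phi)) (θ1, θ2) = fderiv ℝ B (θ1, θ2) (e i) := rfl
  have e10 : pdv i (pdv 1 (pdv 0 Phi)) (θ1, θ2) = fderiv ℝ C (θ1, θ2) (e i) := rfl
  have e11 : pdv i (pdv 1 (pdv 1 Phi)) (θ1, θ2) = fderiv ℝ Dd (θ1, θ2) (e i) := rfl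
  rw [e00, e01, e10, e11]
  -- symmetry of the Hessian and the rpow identity
  have hbc : B (θ1, θ2) = C (θ1, θ2) := pdv_comm (contDiffAt_Phi hp) 0 1
  have hpow : Fd (θ1, θ2) ^ c0 = Fd (θ1, θ2) ^ (c0 - 1) * Fd (θ1, θ2) := by
    rw [← Real.rpow_add_one hne (c0 - 1), sub_add_cancel]
  rw [hpow, hbc]
  have hFp : Fd (θ1, θ2) = A (θ1, θ2) * Dd (θ1, θ2) - C (θ1, θ2) * C (θ1, θ2) := by
    rw [hFval, hbc]
  have hSne : A (θ1, θ2) * Dd (θ1, θ2) - C (θ1, θ2) * C (θ1, θ2) ≠ 0 := by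
    rw [← hFp]; exact hne
  rw [hFp]
  generalize (A (θ1, θ2) * Dd (θ1, θ2) - C (θ1, θ2) * C (θ1, θ2)) ^ (c0 - 1) = P
  have hSne2 : A (θ1, θ2) * Dd (θ1, θ2) - C (θ1, θ2) ^ 2 ≠ 0 := by rw [sq]; exact hSne
  field_simp
  ring
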